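/- Let Y be a measurable subset of the unit space of a groupoid 𝒢. (a) If Y is a domain of (C,N,L)-expansion with Radon–Nikodym ratio bounded by θ, then Y is a domain of Markov (C/(Nθ), N, L)-expansion. (b) If Y is a domain of Markov (κ,N,L)-expansion with ratio bounded by θ, then Y is a domain of (κ/(N√θ + κ), N, L)-expansion. -/

import Mathlib

open MeasureTheory Set

/-- An algebraic groupoid: a set `G` with a distinguished unit space,
source and range maps, a (total, but only meaningful on composable pairs)
multiplication and an inverse. -/
structure AlgGroupoid (G : Type*) where
  unitSpace : Set G
  s : G → G
  r : G → G
  mul : G → G → G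
  inv : G → G
  s_mem : ∀ γ, s γ ∈ unitSpace
  r_mem : ∀ γ, r γ ∈ unitSpace
  s_unit : ∀ x ∈ unitSpace, s x = x
  r_unit : ∀ x ∈ unitSpace, r x = x
  s_mul : ∀ γ₁ γ₂, s γ₁ = r γ₂ → s (mul γ₁ γ₂) = s γ₂
  r_mul : ∀ γ₁ γ₂, s γ₁ = r γ₂ → r (mul γ₁ γ₂) = r γ₁
  mul_assoc' : ∀ γ₁ γ₂ γ₃, s γ₁ = r γ₂ → s γ₂ = r γ₃ →
    mul (mul γ₁ γ₂) γ₃ = mul γ₁ (mul γ₂ γ₃)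
  unit_mul : ∀ γ, mul (r γ) γ = γ
  mul_unit : ∀ γ, mul γ (s γ) = γ
  s_inv : ∀ γ, s (inv γ) = r γ
  r_inv : ∀ γ, r (inv γ) = s γ
  mul_inv : ∀ γ, mul γ (inv γ) = r γ
  inv_mul : ∀ γ, mul (inv γ) γ = s γ

namespace AlgGroupoid

variable {G : Type*} (𝒢 : AlgGroupoid G)

/-- `A⁻¹ = {γ⁻¹ : γ ∈ A}`. -/
def invSet (A : Set G) : Set G := 𝒢.inv '' A

/-- `A · B = {γ₁γ₂ : γ₁ ∈ A, γ₂ ∈ B, s(γ₁) = r(γ₂)}`. -/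
def mulSet (A B : Set G) : Set G :=
  {γ | ∃ γ₁ ∈ A, ∃ γ₂ ∈ B, 𝒢.s γ₁ = 𝒢.r γ₂ ∧ γ = 𝒢.mul γ₁ γ₂}

/-- `r (K ⋅ A)` for `A` a subset of the unit space. -/
def rMul (K A : Set G) : Set G := 𝒢.r '' {γ | γ ∈ K ∧ 𝒢.s γ ∈ A}

/-- A length function on a groupoid. -/
structure IsLength (ℓ : G → ℝ) : Prop where
  nonneg : ∀ γ, 0 ≤ ℓ γ
  unit_zero : ∀ x ∈ 𝒢.unitSpace, ℓ x = 0
  inv_eq : ∀ γ, ℓ (𝒢.inv γ) = ℓ γ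
  subadd : ∀ γ₁ γ₂, 𝒢.s γ₁ = 𝒢.r γ₂ → ℓ (𝒢.mul γ₁ γ₂) ≤ ℓ γ₁ + ℓ γ₂

/-- A bisection: both source and range maps are injective on it. -/
def IsBisection (K : Set G) : Prop := Set.InjOn 𝒢.s K ∧ Set.InjOn 𝒢.r K

/-- `ℓ(K) ≤ L`. -/
def lengthLE (ℓ : G → ℝ) (K : Set G) (L : ℝ) : Prop := ∀ γ ∈ K, ℓ γ ≤ L

variable [MeasurableSpace G]

/-- An admissible bisection: the source and range sets are measurable, the induced
bijection `τ_K = r|_K ∘ (s|_K)⁻¹` is a measure-class-preserving measurable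
isomorphism (formulated at the level of sets), and `ℓ(K) < ∞`. -/
structure IsAdmissible (ℓ : G → ℝ) (μ : Measure G) (K : Set G) : Prop where
  bisection : 𝒢.IsBisection K
  source_meas : MeasurableSet (𝒢.s '' K)
  range_meas : MeasurableSet (𝒢.r '' K)
  image_meas : ∀ A : Set G, MeasurableSet A → A ⊆ 𝒢.s '' K → MeasurableSet (𝒢.rMul K A)
  preimage_meas : ∀ B : Set G, MeasurableSet B → B ⊆ 𝒢.r '' K →
    MeasurableSet (𝒢.rMul (𝒢.invSet K) B)
  null_iff : ∀ A : Set G, MeasurableSet A → A ⊆ 𝒢.s '' K →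
    (μ (𝒢.rMul K A) = 0 ↔ μ A = 0)
  length_bdd : ∃ L : ℝ, ∀ γ ∈ K, ℓ γ ≤ L

/-- `K` is decomposable: a finite union of admissible bisections. -/
def IsDecomposable (ℓ : G → ℝ) (μ : Measure G) (K : Set G) : Prop :=
  ∃ (N : ℕ) (Ks : Fin N → Set G),
    (∀ i, 𝒢.IsAdmissible ℓ μ (Ks i)) ∧ K = ⋃ i, Ks i

/-- `K` is unital symmetric `N`-decomposable. -/
def IsUSDecomposable (ℓ : G → ℝ) (μ : Measure G) (N : ℕ) (K : Set G) : Prop :=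
  ∃ Ks : Fin N → Set G,
    (∀ i, 𝒢.IsAdmissible ℓ μ (Ks i)) ∧ K = ⋃ i, Ks i ∧
    (∃ i, Ks i = 𝒢.unitSpace) ∧
    (∃ σ : Equiv.Perm (Fin N), ∀ i, 𝒢.invSet (Ks i) = Ks (σ i))

/-- `𝒢` is asymptotically expanding in measure `μ`. -/
def AsympExpanding (ℓ : G → ℝ) (μ : Measure G) : Prop :=
  ∀ α : ℝ, 0 < α → α ≤ 1 / 2 →
    ∃ (C L : ℝ) (N : ℕ) (K : Set G), 0 < C ∧
      𝒢.IsUSDecomposable ℓ μ N K ∧ lengthLE ℓ K L ∧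
      ∀ A : Set G, MeasurableSet A → A ⊆ 𝒢.unitSpace →
        α ≤ (μ A).toReal → (μ A).toReal ≤ 1 / 2 →
        C * (μ A).toReal < (μ (𝒢.rMul K A \ A)).toReal

/-- `Y` is a domain of asymptotic expansion. -/
def DomainAsympExp (ℓ : G → ℝ) (μ : Measure G) (Y : Set G) : Prop :=
  ∀ α : ℝ, 0 < α → α ≤ 1 / 2 →
    ∃ (C L : ℝ) (N : ℕ) (K : Set G), 0 < C ∧
      𝒢.IsUSDecomposable ℓ μ N K ∧ lengthLE ℓ K L ∧
      ∀ A : Set G, MeasurableSet A → A ⊆ Y →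
        α * (μ Y).toReal ≤ (μ A).toReal → (μ A).toReal ≤ (μ Y).toReal / 2 →
        C * (μ A).toReal < (μ ((𝒢.rMul K A \ A) ∩ Y)).toReal

end AlgGroupoid

namespace AlgGroupoid

open MeasureTheory

variable {G : Type*} [MeasurableSpace G] (𝒢 : AlgGroupoid G)

/-- The density `σ_{Y,K}(x) = Σ_{i ∈ K_{Y,x}} 𝔕(K_i,x)^{1/2}`. -/
noncomputable def sigmaY (N : ℕ) (Ks : Fin N → Set G) (τ : Fin N → G → G)
    (ρ : Fin N → G → ℝ) (Y : Set G) (x : G) : ℝ :=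
  ∑ i, Set.indicator {z | z ∈ 𝒢.s '' Ks i ∧ τ i z ∈ Y} (fun z => Real.sqrt (ρ i z)) x

/-- The measure `μ̃_{Y,K}(A) = ∫_A σ_{Y,K} dμ`. -/
noncomputable def tildeMu (μ : Measure G) (N : ℕ) (Ks : Fin N → Set G)
    (τ : Fin N → G → G) (ρ : Fin N → G → ℝ) (Y A : Set G) : ENNReal :=
  ∫⁻ x in A, ENNReal.ofReal (𝒢.sigmaY N Ks τ ρ Y x) ∂μ

/-- The `μ̃`-size of the boundary `|∂_{Π_{Y,K}}(A)|_{μ̃}` of `A` for the normalised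
local Markov kernel `Π_{Y,K}`: after cancelling the normalisation `σ_{Y,K}` against
the density of `μ̃`, it equals `∫_A Σ_{i : τᵢ x ∈ Y \ A} √(ρᵢ x) dμ(x)`. -/
noncomputable def markovBoundary (μ : Measure G) (N : ℕ) (Ks : Fin N → Set G)
    (τ : Fin N → G → G) (ρ : Fin N → G → ℝ) (Y A : Set G) : ℝ :=
  ∫ x in A, (∑ i, Set.indicator {z | z ∈ 𝒢.s '' Ks i ∧ τ i z ∈ Y \ A}
    (fun z => Real.sqrt (ρ i z)) x) ∂μ

/-- Data of a unital symmetric decomposition `⋃ᵢ Kᵢ` of length `≤ L` into `N`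
admissible bisections, together with the partial maps `τᵢ = τ_{Kᵢ}` and the
Radon–Nikodym derivatives `ρᵢ = 𝔕(Kᵢ,·)`. -/
structure DecompData (ℓ : G → ℝ) (μ : Measure G) (N : ℕ) (L : ℝ)
    (Ks : Fin N → Set G) (τ : Fin N → G → G) (ρ : Fin N → G → ℝ) : Prop where
  adm : ∀ i, 𝒢.IsAdmissible ℓ μ (Ks i)
  unital : ∃ i, Ks i = 𝒢.unitSpace
  symm : ∃ σ : Equiv.Perm (Fin N), ∀ i, 𝒢.invSet (Ks i) = Ks (σ i)
  lenLE : ∀ i, ∀ γ ∈ Ks i, ℓ γ ≤ L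
  tau_spec : ∀ i, ∀ γ ∈ Ks i, τ i (𝒢.s γ) = 𝒢.r γ
  tau_meas : ∀ i, Measurable (τ i)
  rho_nonneg : ∀ i x, 0 ≤ ρ i x
  rho_meas : ∀ i, Measurable (ρ i)
  rho_spec : ∀ i, ∀ A : Set G, MeasurableSet A → A ⊆ 𝒢.s '' Ks i →
    μ (τ i '' A) = ∫⁻ x in A, ENNReal.ofReal (ρ i x) ∂μ

/-- The ratio condition `1/θ ≤ 𝔕(Kᵢ,x) ≤ θ` for `x ∈ Y` with `τ_{Kᵢ}(x) ∈ Y`. -/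
def RatioBounded (N : ℕ) (Ks : Fin N → Set G) (τ : Fin N → G → G)
    (ρ : Fin N → G → ℝ) (θ : ℝ) (Y : Set G) : Prop :=
  ∀ i x, x ∈ 𝒢.s '' Ks i → x ∈ Y → τ i x ∈ Y → 1 / θ ≤ ρ i x ∧ ρ i x ≤ θ

/-- `K` `C`-expands within `Y`. -/
def ExpandsOn (μ : Measure G) (C : ℝ) (K Y : Set G) : Prop :=
  ∀ A : Set G, MeasurableSet A → A ⊆ Y → 0 < (μ A).toReal →
    (μ A).toReal ≤ (μ Y).toReal / 2 →
    C * (μ A).toReal < (μ ((𝒢.rMul K A \ A) ∩ Y)).toReal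

/-- The Cheeger constant of the normalised local Markov kernel `Π_{Y,K}` on
`(Y, μ̃_{Y,K})` is greater than `C`. -/
def CheegerGT (μ : Measure G) (N : ℕ) (Ks : Fin N → Set G) (τ : Fin N → G → G)
    (ρ : Fin N → G → ℝ) (Y : Set G) (C : ℝ) : Prop :=
  ∀ A : Set G, MeasurableSet A → A ⊆ Y → 0 < 𝒢.tildeMu μ N Ks τ ρ Y A →
    (𝒢.tildeMu μ N Ks τ ρ Y A).toReal ≤ (𝒢.tildeMu μ N Ks τ ρ Y Y).toReal / 2 →
    C * (𝒢.tildeMu μ N Ks τ ρ Y A).toReal < 𝒢.markovBoundary μ N Ks τ ρ Y A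

/-- `Y` is a domain of `(C,N,L)`-expansion (no ratio condition). -/
def IsDomainExp (ℓ : G → ℝ) (μ : Measure G) (C : ℝ) (N : ℕ) (L : ℝ)
    (Y : Set G) : Prop :=
  ∃ (Ks : Fin N → Set G) (τ : Fin N → G → G) (ρ : Fin N → G → ℝ),
    𝒢.DecompData ℓ μ N L Ks τ ρ ∧ 𝒢.ExpandsOn μ C (⋃ i, Ks i) Y

/-- `Y` is a domain of `(C,N,L)`-expansion with ratio bounded by `θ`. -/
def IsDomainExpRatio (ℓ : G → ℝ) (μ : Measure G) (C : ℝ) (N : ℕ) (L θ : ℝ)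
    (Y : Set G) : Prop :=
  ∃ (Ks : Fin N → Set G) (τ : Fin N → G → G) (ρ : Fin N → G → ℝ),
    𝒢.DecompData ℓ μ N L Ks τ ρ ∧ 𝒢.ExpandsOn μ C (⋃ i, Ks i) Y ∧
    𝒢.RatioBounded N Ks τ ρ θ Y

/-- `Y` is a domain of Markov `(C,N,L)`-expansion. -/
def IsDomainMarkovExp (ℓ : G → ℝ) (μ : Measure G) (C : ℝ) (N : ℕ) (L : ℝ)
    (Y : Set G) : Prop :=
  ∃ (Ks : Fin N → Set G) (τ : Fin N → G → G) (ρ : Fin N → G → ℝ),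
    𝒢.DecompData ℓ μ N L Ks τ ρ ∧ 𝒢.CheegerGT μ N Ks τ ρ Y C

/-- `Y` is a domain of Markov `(C,N,L)`-expansion with ratio bounded by `θ`. -/
def IsDomainMarkovExpRatio (ℓ : G → ℝ) (μ : Measure G) (C : ℝ) (N : ℕ) (L θ : ℝ)
    (Y : Set G) : Prop :=
  ∃ (Ks : Fin N → Set G) (τ : Fin N → G → G) (ρ : Fin N → G → ℝ),
    𝒢.DecompData ℓ μ N L Ks τ ρ ∧ 𝒢.CheegerGT μ N Ks τ ρ Y C ∧
    𝒢.RatioBounded N Ks τ ρ θ Y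

end AlgGroupoid


section Stmt11Aux

open MeasureTheory Set

namespace AlgGroupoid

variable {G : Type*} [MeasurableSpace G] {𝒢 : AlgGroupoid G} {ℓ : G → ℝ}
  {μ : Measure G} {N : ℕ} {L θ : ℝ} {Ks : Fin N → Set G}
  {τ : Fin N → G → G} {ρ : Fin N → G → ℝ} {Y : Set G}

/-- The slice of `A` that `τ i` moves into `Y \ A`. -/
def bSlice (𝒢 : AlgGroupoid G) (Ks : Fin N → Set G) (τ : Fin N → G → G)
    (Y A : Set G) (i : Fin N) : Set G :=
  A ∩ (𝒢.s '' Ks i) ∩ (τ i) ⁻¹' (Y \ A)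

lemma bSlice_subset_source {A : Set G} (i : Fin N) :
    bSlice 𝒢 Ks τ Y A i ⊆ 𝒢.s '' Ks i := fun _ hx => hx.1.2

lemma bSlice_meas (hD : 𝒢.DecompData ℓ μ N L Ks τ ρ) (hY : MeasurableSet Y)
    {A : Set G} (hA : MeasurableSet A) (i : Fin N) :
    MeasurableSet (bSlice 𝒢 Ks τ Y A i) :=
  (hA.inter (hD.adm i).source_meas).inter ((hD.tau_meas i) (hY.diff hA))

lemma ratio_facts (hD : 𝒢.DecompData ℓ μ N L Ks τ ρ) (hθ : 1 ≤ θ)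
    (hR : 𝒢.RatioBounded N Ks τ ρ θ Y) {A : Set G} (hAY : A ⊆ Y) {i : Fin N} {x : G}
    (hx : x ∈ bSlice 𝒢 Ks τ Y A i) :
    Real.sqrt (ρ i x) ≤ Real.sqrt θ ∧ 1 ≤ Real.sqrt θ * Real.sqrt (ρ i x) ∧
      ρ i x ≤ Real.sqrt θ * Real.sqrt (ρ i x) ∧
      Real.sqrt (ρ i x) ≤ Real.sqrt θ * ρ i x := by
  obtain ⟨⟨hxA, hxs⟩, hxp⟩ := hx
  have hθ0 : (0:ℝ) < θ := lt_of_lt_of_le one_pos hθ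
  have h := hR i x hxs (hAY hxA) hxp.1
  have hρ0 : 0 ≤ ρ i x := hD.rho_nonneg i x
  have s1 : Real.sqrt (ρ i x) ≤ Real.sqrt θ := Real.sqrt_le_sqrt h.2
  have s2 : Real.sqrt (1/θ) ≤ Real.sqrt (ρ i x) := Real.sqrt_le_sqrt h.1
  have key : Real.sqrt θ * Real.sqrt (1/θ) = 1 := by
    rw [← Real.sqrt_mul hθ0.le, mul_one_div, div_self (ne_of_gt hθ0), Real.sqrt_one]
  have f2 : 1 ≤ Real.sqrt θ * Real.sqrt (ρ i x) := by
    calc (1:ℝ) = Real.sqrt θ * Real.sqrt (1/θ) := key.symm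
    _ ≤ Real.sqrt θ * Real.sqrt (ρ i x) :=
        mul_le_mul_of_nonneg_left s2 (Real.sqrt_nonneg θ)
  have sq : Real.sqrt (ρ i x) * Real.sqrt (ρ i x) = ρ i x := Real.mul_self_sqrt hρ0
  refine ⟨s1, f2, ?_, ?_⟩
  · nlinarith [Real.sqrt_nonneg (ρ i x)]
  · nlinarith [Real.sqrt_nonneg (ρ i x)]

lemma integrableOn_of_bound [IsFiniteMeasure μ] {f : G → ℝ} (hf : Measurable f)
    {S : Set G} (hS : MeasurableSet S) {c : ℝ} (h : ∀ x ∈ S, |f x| ≤ c) :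
    IntegrableOn f S μ := by
  refine Integrable.mono' (integrable_const c) hf.aestronglyMeasurable ?_
  exact (ae_restrict_mem hS).mono fun x hx => by simpa [Real.norm_eq_abs] using h x hx

lemma integrableOn_sqrt_rho [IsFiniteMeasure μ] (hD : 𝒢.DecompData ℓ μ N L Ks τ ρ)
    (hθ : 1 ≤ θ) (hR : 𝒢.RatioBounded N Ks τ ρ θ Y) (hY : MeasurableSet Y)
    {A : Set G} (hA : MeasurableSet A) (hAY : A ⊆ Y) (i : Fin N) :
    IntegrableOn (fun x => Real.sqrt (ρ i x)) (bSlice 𝒢 Ks τ Y A i) μ := by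
  refine integrableOn_of_bound (c := Real.sqrt θ) (hD.rho_meas i).sqrt
    (bSlice_meas hD hY hA i) fun x hx => ?_
  rw [abs_of_nonneg (Real.sqrt_nonneg _)]
  exact (ratio_facts hD hθ hR hAY hx).1

lemma integrableOn_rho [IsFiniteMeasure μ] (hD : 𝒢.DecompData ℓ μ N L Ks τ ρ)
    (hθ : 1 ≤ θ) (hR : 𝒢.RatioBounded N Ks τ ρ θ Y) (hY : MeasurableSet Y)
    {A : Set G} (hA : MeasurableSet A) (hAY : A ⊆ Y) (i : Fin N) :
    IntegrableOn (fun x => ρ i x) (bSlice 𝒢 Ks τ Y A i) μ := by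
  refine integrableOn_of_bound (c := θ) (hD.rho_meas i)
    (bSlice_meas hD hY hA i) fun x hx => ?_
  rw [abs_of_nonneg (hD.rho_nonneg i x)]
  obtain ⟨⟨hxA, hxs⟩, hxp⟩ := hx
  exact (hR i x hxs (hAY hxA) hxp.1).2

lemma mB_eq [IsFiniteMeasure μ] (hD : 𝒢.DecompData ℓ μ N L Ks τ ρ)
    (hθ : 1 ≤ θ) (hR : 𝒢.RatioBounded N Ks τ ρ θ Y) (hY : MeasurableSet Y)
    {A : Set G} (hA : MeasurableSet A) (hAY : A ⊆ Y) :
    𝒢.markovBoundary μ N Ks τ ρ Y A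
      = ∑ i, ∫ x in bSlice 𝒢 Ks τ Y A i, Real.sqrt (ρ i x) ∂μ := by
  have hM : ∀ i : Fin N, MeasurableSet ((𝒢.s '' Ks i) ∩ (τ i) ⁻¹' (Y \ A)) :=
    fun i => (hD.adm i).source_meas.inter ((hD.tau_meas i) (hY.diff hA))
  have hint : ∀ i ∈ Finset.univ, IntegrableOn
      (fun x => Set.indicator {z | z ∈ 𝒢.s '' Ks i ∧ τ i z ∈ Y \ A}
        (fun z => Real.sqrt (ρ i z)) x) A μ := by
    intro i _
    refine integrableOn_of_bound (c := Real.sqrt θ)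
      ((hD.rho_meas i).sqrt.indicator (hM i)) hA fun x hx => ?_
    by_cases hmem : x ∈ (𝒢.s '' Ks i) ∩ (τ i) ⁻¹' (Y \ A)
    · rw [Set.indicator_of_mem hmem, abs_of_nonneg (Real.sqrt_nonneg _)]
      exact (ratio_facts hD hθ hR hAY ⟨⟨hx, hmem.1⟩, hmem.2⟩).1
    · rw [Set.indicator_of_notMem hmem]
      simpa using Real.sqrt_nonneg θ
  unfold markovBoundary
  rw [integral_finset_sum Finset.univ hint]
  refine Finset.sum_congr rfl fun i _ => ?_
  rw [show {z | z ∈ 𝒢.s '' Ks i ∧ τ i z ∈ Y \ A}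
      = (𝒢.s '' Ks i) ∩ (τ i) ⁻¹' (Y \ A) from rfl,
    setIntegral_indicator (hM i)]
  rw [show A ∩ (𝒢.s '' Ks i ∩ (τ i) ⁻¹' (Y \ A)) = bSlice 𝒢 Ks τ Y A i from
    (Set.inter_assoc _ _ _).symm]

lemma mB_nonneg {A : Set G} (hA : MeasurableSet A) :
    0 ≤ 𝒢.markovBoundary μ N Ks τ ρ Y A :=
  setIntegral_nonneg hA fun x _ => Finset.sum_nonneg fun i _ =>
    Set.indicator_nonneg (fun z _ => Real.sqrt_nonneg _) x

lemma key_sum [IsFiniteMeasure μ] (hD : 𝒢.DecompData ℓ μ N L Ks τ ρ)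
    (hθ : 1 ≤ θ) (hR : 𝒢.RatioBounded N Ks τ ρ θ Y) (hY : MeasurableSet Y)
    {A : Set G} (hA : MeasurableSet A) (hAY : A ⊆ Y) :
    ∑ i, ∫⁻ x in bSlice 𝒢 Ks τ Y A i,
        ENNReal.ofReal (Real.sqrt θ * Real.sqrt (ρ i x)) ∂μ
      = ENNReal.ofReal (Real.sqrt θ * 𝒢.markovBoundary μ N Ks τ ρ Y A) := by
  rw [mB_eq hD hθ hR hY hA hAY, Finset.mul_sum,
    ENNReal.ofReal_sum_of_nonneg (fun i _ => mul_nonneg (Real.sqrt_nonneg θ)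
      (setIntegral_nonneg (bSlice_meas hD hY hA i) fun x _ => Real.sqrt_nonneg _))]
  refine Finset.sum_congr rfl fun i _ => ?_
  rw [← integral_const_mul]
  exact (ofReal_integral_eq_lintegral_ofReal
    ((integrableOn_sqrt_rho hD hθ hR hY hA hAY i).const_mul _)
    (ae_of_all _ fun x => mul_nonneg (Real.sqrt_nonneg _) (Real.sqrt_nonneg _))).symm

lemma slice_lintegral_ge_tau (hD : 𝒢.DecompData ℓ μ N L Ks τ ρ)
    (hθ : 1 ≤ θ) (hR : 𝒢.RatioBounded N Ks τ ρ θ Y) (hY : MeasurableSet Y)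
    {A : Set G} (hA : MeasurableSet A) (hAY : A ⊆ Y) (i : Fin N) :
    μ (τ i '' bSlice 𝒢 Ks τ Y A i)
      ≤ ∫⁻ x in bSlice 𝒢 Ks τ Y A i,
          ENNReal.ofReal (Real.sqrt θ * Real.sqrt (ρ i x)) ∂μ := by
  rw [hD.rho_spec i _ (bSlice_meas hD hY hA i) (bSlice_subset_source i)]
  exact setLIntegral_mono' (bSlice_meas hD hY hA i) fun x hx =>
    ENNReal.ofReal_le_ofReal (ratio_facts hD hθ hR hAY hx).2.2.1

lemma slice_lintegral_ge_self (hD : 𝒢.DecompData ℓ μ N L Ks τ ρ)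
    (hθ : 1 ≤ θ) (hR : 𝒢.RatioBounded N Ks τ ρ θ Y) (hY : MeasurableSet Y)
    {A : Set G} (hA : MeasurableSet A) (hAY : A ⊆ Y) (i : Fin N) :
    μ (bSlice 𝒢 Ks τ Y A i)
      ≤ ∫⁻ x in bSlice 𝒢 Ks τ Y A i,
          ENNReal.ofReal (Real.sqrt θ * Real.sqrt (ρ i x)) ∂μ := by
  rw [← setLIntegral_one]
  refine setLIntegral_mono' (bSlice_meas hD hY hA i) fun x hx => ?_
  rw [← ENNReal.ofReal_one]
  exact ENNReal.ofReal_le_ofReal (ratio_facts hD hθ hR hAY hx).2.1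

lemma measure_le_sqrt_mul_mB [IsFiniteMeasure μ] (hD : 𝒢.DecompData ℓ μ N L Ks τ ρ)
    (hθ : 1 ≤ θ) (hR : 𝒢.RatioBounded N Ks τ ρ θ Y) (hY : MeasurableSet Y)
    {A : Set G} (hA : MeasurableSet A) (hAY : A ⊆ Y) {W : Set G} {T : Fin N → Set G}
    (hWT : W ⊆ ⋃ i, T i)
    (hT : ∀ i, μ (T i) ≤ ∫⁻ x in bSlice 𝒢 Ks τ Y A i,
        ENNReal.ofReal (Real.sqrt θ * Real.sqrt (ρ i x)) ∂μ) :
    (μ W).toReal ≤ Real.sqrt θ * 𝒢.markovBoundary μ N Ks τ ρ Y A := by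
  have h1 : μ W ≤ ENNReal.ofReal (Real.sqrt θ * 𝒢.markovBoundary μ N Ks τ ρ Y A) := by
    calc μ W ≤ μ (⋃ i, T i) := measure_mono hWT
    _ ≤ ∑' i, μ (T i) := measure_iUnion_le T
    _ = ∑ i, μ (T i) := tsum_fintype _
    _ ≤ ∑ i, ∫⁻ x in bSlice 𝒢 Ks τ Y A i,
          ENNReal.ofReal (Real.sqrt θ * Real.sqrt (ρ i x)) ∂μ :=
        Finset.sum_le_sum fun i _ => hT i
    _ = _ := key_sum hD hθ hR hY hA hAY
  exact ENNReal.toReal_le_of_le_ofReal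
    (mul_nonneg (Real.sqrt_nonneg θ) (mB_nonneg hA)) h1

lemma mB_le_of_tau_subset [IsFiniteMeasure μ] (hD : 𝒢.DecompData ℓ μ N L Ks τ ρ)
    (hθ : 1 ≤ θ) (hR : 𝒢.RatioBounded N Ks τ ρ θ Y) (hY : MeasurableSet Y)
    {A : Set G} (hA : MeasurableSet A) (hAY : A ⊆ Y) {W : Set G}
    (hsub : ∀ i, τ i '' bSlice 𝒢 Ks τ Y A i ⊆ W) :
    𝒢.markovBoundary μ N Ks τ ρ Y A ≤ (N : ℝ) * Real.sqrt θ * (μ W).toReal := by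
  rw [mB_eq hD hθ hR hY hA hAY]
  have hbound : ∀ i : Fin N, ∫ x in bSlice 𝒢 Ks τ Y A i, Real.sqrt (ρ i x) ∂μ
      ≤ Real.sqrt θ * (μ W).toReal := by
    intro i
    have h1 : ∫ x in bSlice 𝒢 Ks τ Y A i, Real.sqrt (ρ i x) ∂μ
        ≤ ∫ x in bSlice 𝒢 Ks τ Y A i, Real.sqrt θ * ρ i x ∂μ :=
      setIntegral_mono_on (integrableOn_sqrt_rho hD hθ hR hY hA hAY i)
        ((integrableOn_rho hD hθ hR hY hA hAY i).const_mul _)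
        (bSlice_meas hD hY hA i) fun x hx => (ratio_facts hD hθ hR hAY hx).2.2.2
    have h2 : ∫ x in bSlice 𝒢 Ks τ Y A i, Real.sqrt θ * ρ i x ∂μ
        = Real.sqrt θ * ∫ x in bSlice 𝒢 Ks τ Y A i, ρ i x ∂μ := integral_const_mul _ _
    have h3nn : 0 ≤ ∫ x in bSlice 𝒢 Ks τ Y A i, ρ i x ∂μ :=
      setIntegral_nonneg (bSlice_meas hD hY hA i) fun x _ => hD.rho_nonneg i x
    have h3 : ENNReal.ofReal (∫ x in bSlice 𝒢 Ks τ Y A i, ρ i x ∂μ)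
        = μ (τ i '' bSlice 𝒢 Ks τ Y A i) := by
      rw [ofReal_integral_eq_lintegral_ofReal (integrableOn_rho hD hθ hR hY hA hAY i)
        (ae_of_all _ fun x => hD.rho_nonneg i x)]
      exact (hD.rho_spec i _ (bSlice_meas hD hY hA i) (bSlice_subset_source i)).symm
    have h4 : ∫ x in bSlice 𝒢 Ks τ Y A i, ρ i x ∂μ ≤ (μ W).toReal := by
      calc ∫ x in bSlice 𝒢 Ks τ Y A i, ρ i x ∂μ
          = (ENNReal.ofReal (∫ x in bSlice 𝒢 Ks τ Y A i, ρ i x ∂μ)).toReal :=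
            (ENNReal.toReal_ofReal h3nn).symm
      _ = (μ (τ i '' bSlice 𝒢 Ks τ Y A i)).toReal := by rw [h3]
      _ ≤ (μ W).toReal :=
            ENNReal.toReal_mono (measure_ne_top μ W) (measure_mono (hsub i))
    calc ∫ x in bSlice 𝒢 Ks τ Y A i, Real.sqrt (ρ i x) ∂μ
        ≤ Real.sqrt θ * ∫ x in bSlice 𝒢 Ks τ Y A i, ρ i x ∂μ := h1.trans_eq h2
    _ ≤ Real.sqrt θ * (μ W).toReal :=
        mul_le_mul_of_nonneg_left h4 (Real.sqrt_nonneg θ)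
  calc ∑ i, ∫ x in bSlice 𝒢 Ks τ Y A i, Real.sqrt (ρ i x) ∂μ
      ≤ ∑ _i : Fin N, Real.sqrt θ * (μ W).toReal :=
        Finset.sum_le_sum fun i _ => hbound i
  _ = (N : ℝ) * Real.sqrt θ * (μ W).toReal := by
      rw [Finset.sum_const, Finset.card_univ, Fintype.card_fin, nsmul_eq_mul]; ring

lemma mB_le_of_subset [IsFiniteMeasure μ] (hD : 𝒢.DecompData ℓ μ N L Ks τ ρ)
    (hθ : 1 ≤ θ) (hR : 𝒢.RatioBounded N Ks τ ρ θ Y) (hY : MeasurableSet Y)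
    {A : Set G} (hA : MeasurableSet A) (hAY : A ⊆ Y) {W : Set G}
    (hsub : ∀ i, bSlice 𝒢 Ks τ Y A i ⊆ W) :
    𝒢.markovBoundary μ N Ks τ ρ Y A ≤ (N : ℝ) * Real.sqrt θ * (μ W).toReal := by
  rw [mB_eq hD hθ hR hY hA hAY]
  have hbound : ∀ i : Fin N, ∫ x in bSlice 𝒢 Ks τ Y A i, Real.sqrt (ρ i x) ∂μ
      ≤ Real.sqrt θ * (μ W).toReal := by
    intro i
    have h1 : ∫ x in bSlice 𝒢 Ks τ Y A i, Real.sqrt (ρ i x) ∂μ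
        ≤ ∫ _x in bSlice 𝒢 Ks τ Y A i, Real.sqrt θ ∂μ :=
      setIntegral_mono_on (integrableOn_sqrt_rho hD hθ hR hY hA hAY i)
        (integrableOn_const (measure_ne_top μ _))
        (bSlice_meas hD hY hA i) fun x hx => (ratio_facts hD hθ hR hAY hx).1
    have h2 : ∫ _x in bSlice 𝒢 Ks τ Y A i, Real.sqrt θ ∂μ
        = (μ (bSlice 𝒢 Ks τ Y A i)).toReal * Real.sqrt θ := by
      rw [setIntegral_const, smul_eq_mul, Measure.real]
    refine h1.trans ?_
    rw [h2, mul_comm]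
    exact mul_le_mul_of_nonneg_left
      (ENNReal.toReal_mono (measure_ne_top μ W) (measure_mono (hsub i)))
      (Real.sqrt_nonneg θ)
  calc ∑ i, ∫ x in bSlice 𝒢 Ks τ Y A i, Real.sqrt (ρ i x) ∂μ
      ≤ ∑ _i : Fin N, Real.sqrt θ * (μ W).toReal :=
        Finset.sum_le_sum fun i _ => hbound i
  _ = (N : ℝ) * Real.sqrt θ * (μ W).toReal := by
      rw [Finset.sum_const, Finset.card_univ, Fintype.card_fin, nsmul_eq_mul]; ring

lemma sigma_le_bound (hD : 𝒢.DecompData ℓ μ N L Ks τ ρ) (hθ : 1 ≤ θ)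
    (hR : 𝒢.RatioBounded N Ks τ ρ θ Y) {x : G} (hx : x ∈ Y) :
    𝒢.sigmaY N Ks τ ρ Y x ≤ (N : ℝ) * Real.sqrt θ := by
  have hterm : ∀ i : Fin N, Set.indicator {z | z ∈ 𝒢.s '' Ks i ∧ τ i z ∈ Y}
      (fun z => Real.sqrt (ρ i z)) x ≤ Real.sqrt θ := by
    intro i
    by_cases hmem : x ∈ {z | z ∈ 𝒢.s '' Ks i ∧ τ i z ∈ Y}
    · rw [Set.indicator_of_mem hmem]
      exact Real.sqrt_le_sqrt (hR i x hmem.1 hx hmem.2).2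
    · rw [Set.indicator_of_notMem hmem]
      exact Real.sqrt_nonneg θ
  calc 𝒢.sigmaY N Ks τ ρ Y x ≤ ∑ _i : Fin N, Real.sqrt θ :=
      Finset.sum_le_sum fun i _ => hterm i
  _ = (N : ℝ) * Real.sqrt θ := by
      rw [Finset.sum_const, Finset.card_univ, Fintype.card_fin, nsmul_eq_mul]

lemma tildeMu_le (hD : 𝒢.DecompData ℓ μ N L Ks τ ρ) (hθ : 1 ≤ θ)
    (hR : 𝒢.RatioBounded N Ks τ ρ θ Y) {S : Set G} (hS : MeasurableSet S) (hSY : S ⊆ Y) :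
    𝒢.tildeMu μ N Ks τ ρ Y S ≤ ENNReal.ofReal ((N : ℝ) * Real.sqrt θ) * μ S := by
  calc 𝒢.tildeMu μ N Ks τ ρ Y S
      ≤ ∫⁻ _x in S, ENNReal.ofReal ((N : ℝ) * Real.sqrt θ) ∂μ :=
      setLIntegral_mono' hS fun x hx =>
        ENNReal.ofReal_le_ofReal (sigma_le_bound hD hθ hR (hSY hx))
  _ = _ := by rw [setLIntegral_const]

lemma tildeMu_ne_top [IsFiniteMeasure μ] (hD : 𝒢.DecompData ℓ μ N L Ks τ ρ) (hθ : 1 ≤ θ)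
    (hR : 𝒢.RatioBounded N Ks τ ρ θ Y) {S : Set G} (hS : MeasurableSet S) (hSY : S ⊆ Y) :
    𝒢.tildeMu μ N Ks τ ρ Y S ≠ ⊤ :=
  ne_top_of_le_ne_top (ENNReal.mul_ne_top ENNReal.ofReal_ne_top (measure_ne_top μ S))
    (tildeMu_le hD hθ hR hS hSY)

lemma tildeMu_toReal_le [IsFiniteMeasure μ] (hD : 𝒢.DecompData ℓ μ N L Ks τ ρ) (hθ : 1 ≤ θ)
    (hR : 𝒢.RatioBounded N Ks τ ρ θ Y) {S : Set G} (hS : MeasurableSet S) (hSY : S ⊆ Y) :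
    (𝒢.tildeMu μ N Ks τ ρ Y S).toReal ≤ (N : ℝ) * Real.sqrt θ * (μ S).toReal := by
  have h := ENNReal.toReal_mono
    (ENNReal.mul_ne_top ENNReal.ofReal_ne_top (measure_ne_top μ S))
    (tildeMu_le hD hθ hR hS hSY)
  rwa [ENNReal.toReal_mul, ENNReal.toReal_ofReal
    (mul_nonneg (Nat.cast_nonneg N) (Real.sqrt_nonneg θ))] at h

lemma tildeMu_zero {S : Set G} (h : μ S = 0) : 𝒢.tildeMu μ N Ks τ ρ Y S = 0 :=
  setLIntegral_measure_zero _ _ h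

lemma tildeMu_add (hY : MeasurableSet Y) {A : Set G} (hA : MeasurableSet A) (hAY : A ⊆ Y) :
    𝒢.tildeMu μ N Ks τ ρ Y A + 𝒢.tildeMu μ N Ks τ ρ Y (Y \ A)
      = 𝒢.tildeMu μ N Ks τ ρ Y Y := by
  unfold tildeMu
  rw [← lintegral_union (hY.diff hA) Set.disjoint_sdiff_right, Set.union_diff_cancel hAY]

lemma le_tildeMu [IsFiniteMeasure μ] (hD : 𝒢.DecompData ℓ μ N L Ks τ ρ)
    (hYsub : Y ⊆ 𝒢.unitSpace) {S : Set G} (hS : MeasurableSet S) (hSY : S ⊆ Y) :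
    μ S ≤ 𝒢.tildeMu μ N Ks τ ρ Y S := by
  obtain ⟨i₀, hi₀⟩ := hD.unital
  have hU : 𝒢.s '' Ks i₀ = 𝒢.unitSpace := by
    rw [hi₀]
    ext x
    constructor
    · rintro ⟨γ, _, rfl⟩; exact 𝒢.s_mem γ
    · intro hx; exact ⟨x, hx, 𝒢.s_unit x hx⟩
  have hτid : ∀ x ∈ 𝒢.unitSpace, τ i₀ x = x := by
    intro x hx
    have h := hD.tau_spec i₀ x (by rw [hi₀]; exact hx)
    rwa [𝒢.s_unit x hx, 𝒢.r_unit x hx] at h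
  have hUm : MeasurableSet 𝒢.unitSpace := hU ▸ (hD.adm i₀).source_meas
  have hEn : ∀ n : ℕ, μ {x | x ∈ 𝒢.unitSpace ∧ ρ i₀ x ≤ 1 - 1/(n+1)} = 0 := by
    intro n
    set E := {x | x ∈ 𝒢.unitSpace ∧ ρ i₀ x ≤ 1 - 1/(n+1)} with hE
    have hEm : MeasurableSet E := by
      have : E = 𝒢.unitSpace ∩ (ρ i₀) ⁻¹' (Set.Iic (1 - 1/(n+1))) := rfl
      rw [this]
      exact hUm.inter ((hD.rho_meas i₀) measurableSet_Iic)
    have hEsub : E ⊆ 𝒢.s '' Ks i₀ := by rw [hU]; exact fun x hx => hx.1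
    have hτE : τ i₀ '' E = E := by
      ext y
      constructor
      · rintro ⟨x, hx, rfl⟩; rwa [hτid x hx.1]
      · intro hy; exact ⟨y, hy, hτid y hy.1⟩
    have h1 := hD.rho_spec i₀ E hEm hEsub
    rw [hτE] at h1
    have h2 : ∫⁻ x in E, ENNReal.ofReal (ρ i₀ x) ∂μ
        ≤ ENNReal.ofReal (1 - 1/(n+1)) * μ E := by
      refine le_trans (setLIntegral_mono' hEm fun x hx =>
        ENNReal.ofReal_le_ofReal hx.2) ?_
      rw [setLIntegral_const]
    rw [← h1] at h2
    by_contra hne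
    have hfin : μ E ≠ ⊤ := measure_ne_top μ E
    have hc : ENNReal.ofReal (1 - 1/(n+1)) < 1 := by
      rw [ENNReal.ofReal_lt_one]
      have : (0:ℝ) < 1/(n+1) := by positivity
      linarith
    have hlt : ENNReal.ofReal (1 - 1/(n+1)) * μ E < 1 * μ E :=
      (ENNReal.mul_lt_mul_iff_left hne hfin).mpr hc
    rw [one_mul] at hlt
    exact absurd (h2.trans_lt hlt) (lt_irrefl _)
  have hnull : μ {x | x ∈ 𝒢.unitSpace ∧ ρ i₀ x < 1} = 0 := by
    refine measure_mono_null ?_ (measure_iUnion_null fun n => hEn n)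
    intro x hx
    obtain ⟨n, hn⟩ := exists_nat_one_div_lt (show (0:ℝ) < 1 - ρ i₀ x by linarith [hx.2])
    exact Set.mem_iUnion.mpr ⟨n, hx.1, by linarith⟩
  have hae : ∀ᵐ x ∂μ.restrict S, (1 : ENNReal) ≤ ENNReal.ofReal (𝒢.sigmaY N Ks τ ρ Y x) := by
    have h1 : ∀ᵐ x ∂μ.restrict S, x ∈ S := ae_restrict_mem hS
    have h2 : ∀ᵐ x ∂μ, x ∉ {x | x ∈ 𝒢.unitSpace ∧ ρ i₀ x < 1} :=
      measure_eq_zero_iff_ae_notMem.mp hnull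
    filter_upwards [h1, ae_restrict_of_ae h2] with x hxS hxg
    have hxY : x ∈ Y := hSY hxS
    have hxU : x ∈ 𝒢.unitSpace := hYsub hxY
    have hρ1 : 1 ≤ ρ i₀ x := not_lt.1 fun h => hxg ⟨hxU, h⟩
    have hterm : (1:ℝ) ≤ Set.indicator {z | z ∈ 𝒢.s '' Ks i₀ ∧ τ i₀ z ∈ Y}
        (fun z => Real.sqrt (ρ i₀ z)) x := by
      have hmem : x ∈ {z | z ∈ 𝒢.s '' Ks i₀ ∧ τ i₀ z ∈ Y} :=
        ⟨by rw [hU]; exact hxU, by rw [hτid x hxU]; exact hxY⟩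
      rw [Set.indicator_of_mem hmem]
      calc (1:ℝ) = Real.sqrt 1 := Real.sqrt_one.symm
      _ ≤ Real.sqrt (ρ i₀ x) := Real.sqrt_le_sqrt hρ1
    have hσ : (1:ℝ) ≤ 𝒢.sigmaY N Ks τ ρ Y x :=
      hterm.trans (Finset.single_le_sum
        (f := fun i => Set.indicator {z | z ∈ 𝒢.s '' Ks i ∧ τ i z ∈ Y}
          (fun z => Real.sqrt (ρ i z)) x)
        (fun i _ => Set.indicator_nonneg (fun z _ => Real.sqrt_nonneg _) x)
        (Finset.mem_univ i₀))
    calc (1:ENNReal) = ENNReal.ofReal 1 := ENNReal.ofReal_one.symm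
    _ ≤ _ := ENNReal.ofReal_le_ofReal hσ
  calc μ S = ∫⁻ _x in S, 1 ∂μ := (setLIntegral_one S).symm
  _ ≤ ∫⁻ x in S, ENNReal.ofReal (𝒢.sigmaY N Ks τ ρ Y x) ∂μ := lintegral_mono_ae hae
  _ = 𝒢.tildeMu μ N Ks τ ρ Y S := rfl

lemma subset_tau_slices (hD : 𝒢.DecompData ℓ μ N L Ks τ ρ) {A : Set G} :
    (𝒢.rMul (⋃ i, Ks i) A \ A) ∩ Y ⊆ ⋃ i, τ i '' bSlice 𝒢 Ks τ Y A i := by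
  rintro y ⟨⟨⟨γ, ⟨hγK, hsγ⟩, rfl⟩, hyA⟩, hyY⟩
  obtain ⟨i, hi⟩ := Set.mem_iUnion.mp hγK
  refine Set.mem_iUnion.mpr ⟨i, 𝒢.s γ, ⟨⟨hsγ, ⟨γ, hi, rfl⟩⟩, ?_⟩, hD.tau_spec i γ hi⟩
  show τ i (𝒢.s γ) ∈ Y \ A
  rw [hD.tau_spec i γ hi]
  exact ⟨hyY, hyA⟩

lemma tau_slices_subset (hD : 𝒢.DecompData ℓ μ N L Ks τ ρ) {A : Set G} (i : Fin N) :
    τ i '' bSlice 𝒢 Ks τ Y A i ⊆ (𝒢.rMul (⋃ j, Ks j) A \ A) ∩ Y := by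
  rintro y ⟨x, ⟨⟨hxA, ⟨γ, hγ, rfl⟩⟩, hpre⟩, rfl⟩
  have hτ : τ i (𝒢.s γ) = 𝒢.r γ := hD.tau_spec i γ hγ
  have hpre' : τ i (𝒢.s γ) ∈ Y \ A := hpre
  exact ⟨⟨⟨γ, ⟨Set.mem_iUnion.mpr ⟨i, hγ⟩, hxA⟩, hτ.symm⟩, hpre'.2⟩, hpre'.1⟩

lemma compl_bdry_subset_slices (hD : 𝒢.DecompData ℓ μ N L Ks τ ρ) {A : Set G} :
    (𝒢.rMul (⋃ i, Ks i) (Y \ A) \ (Y \ A)) ∩ Y ⊆ ⋃ i, bSlice 𝒢 Ks τ Y A i := by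
  rintro y ⟨⟨⟨γ, ⟨hγK, hsγ⟩, rfl⟩, hyB⟩, hyY⟩
  obtain ⟨i, hi⟩ := Set.mem_iUnion.mp hγK
  obtain ⟨σp, hσp⟩ := hD.symm
  have hinv : 𝒢.inv γ ∈ Ks (σp i) := by rw [← hσp i]; exact ⟨γ, hi, rfl⟩
  have hyA : 𝒢.r γ ∈ A := by
    by_contra h
    exact hyB ⟨hyY, h⟩
  refine Set.mem_iUnion.mpr ⟨σp i, ⟨⟨hyA, ⟨𝒢.inv γ, hinv, 𝒢.s_inv γ⟩⟩, ?_⟩⟩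
  show τ (σp i) (𝒢.r γ) ∈ Y \ A
  have h := hD.tau_spec (σp i) (𝒢.inv γ) hinv
  rw [𝒢.s_inv, 𝒢.r_inv] at h
  rw [h]
  exact hsγ

lemma compl_slices_subset_bdry (hD : 𝒢.DecompData ℓ μ N L Ks τ ρ) {A : Set G}
    (hAY : A ⊆ Y) (i : Fin N) :
    bSlice 𝒢 Ks τ Y (Y \ A) i ⊆ (𝒢.rMul (⋃ j, Ks j) A \ A) ∩ Y := by
  rintro x ⟨⟨hxB, ⟨γ, hγ, rfl⟩⟩, hpre⟩
  have hτ : τ i (𝒢.s γ) = 𝒢.r γ := hD.tau_spec i γ hγ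
  have hpre' : τ i (𝒢.s γ) ∈ Y \ (Y \ A) := hpre
  have hrA : 𝒢.r γ ∈ A := by
    rw [hτ] at hpre'
    rcases hpre' with ⟨h1, h2⟩
    by_contra h
    exact h2 ⟨h1, h⟩
  obtain ⟨σp, hσp⟩ := hD.symm
  have hinv : 𝒢.inv γ ∈ Ks (σp i) := by rw [← hσp i]; exact ⟨γ, hγ, rfl⟩
  refine ⟨⟨⟨𝒢.inv γ, ⟨Set.mem_iUnion.mpr ⟨σp i, hinv⟩, ?_⟩, 𝒢.r_inv γ⟩, hxB.2⟩, hxB.1⟩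
  rw [𝒢.s_inv]
  exact hrA

end AlgGroupoid

end Stmt11Aux

open MeasureTheory in
/-- (a) a domain of `(C,N,L)`-expansion with ratio bounded by `θ` is a
domain of Markov `(C/(Nθ),N,L)`-expansion; (b) a domain of Markov
`(κ,N,L)`-expansion with ratio bounded by `θ` is a domain of
`(κ/(N√θ+κ),N,L)`-expansion. -/
theorem stmt11 {G : Type*} [MeasurableSpace G] (𝒢 : AlgGroupoid G) (ℓ : G → ℝ)
    (hℓ : 𝒢.IsLength ℓ) (μ : Measure G) [IsProbabilityMeasure μ]
    (Y : Set G) (hY : MeasurableSet Y) (hYsub : Y ⊆ 𝒢.unitSpace)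
    (N : ℕ) (L θ : ℝ) (hθ : 1 ≤ θ) (C kap : ℝ) (hC : 0 < C) (hkap : 0 < kap) :
    (𝒢.IsDomainExpRatio ℓ μ C N L θ Y →
      𝒢.IsDomainMarkovExp ℓ μ (C / (N * θ)) N L Y) ∧
    (𝒢.IsDomainMarkovExpRatio ℓ μ kap N L θ Y →
      𝒢.IsDomainExp ℓ μ (kap / (N * Real.sqrt θ + kap)) N L Y) := by
  have hθ0 : (0:ℝ) < θ := lt_of_lt_of_le one_pos hθ
  have sθpos : 0 < Real.sqrt θ := Real.sqrt_pos.mpr hθ0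
  have hsq : Real.sqrt θ * Real.sqrt θ = θ := Real.mul_self_sqrt hθ0.le
  constructor
  · -- (a)
    rintro ⟨Ks, τ, ρ, hD, hExp, hR⟩
    have hN : 0 < (N:ℝ) := by
      obtain ⟨i, _⟩ := hD.unital
      exact_mod_cast i.pos
    refine ⟨Ks, τ, ρ, hD, ?_⟩
    intro A hA hAY hpos hhalf
    have hmBnn : 0 ≤ 𝒢.markovBoundary μ N Ks τ ρ Y A := AlgGroupoid.mB_nonneg hA
    have htAfin : 𝒢.tildeMu μ N Ks τ ρ Y A ≠ ⊤ :=
      AlgGroupoid.tildeMu_ne_top hD hθ hR hA hAY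
    have hcnn : 0 ≤ C / ((N:ℝ) * θ) := div_nonneg hC.le (mul_nonneg hN.le hθ0.le)
    by_cases hcase : (μ A).toReal ≤ (μ Y).toReal / 2
    · -- apply expansion to A itself
      have hμA0 : μ A ≠ 0 := by
        intro h0
        rw [AlgGroupoid.tildeMu_zero h0] at hpos
        exact lt_irrefl _ hpos
      have hApos : 0 < (μ A).toReal := ENNReal.toReal_pos hμA0 (measure_ne_top μ A)
      have hExpA := hExp A hA hAY hApos hcase
      have hDle : (μ ((𝒢.rMul (⋃ i, Ks i) A \ A) ∩ Y)).toReal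
          ≤ Real.sqrt θ * 𝒢.markovBoundary μ N Ks τ ρ Y A :=
        AlgGroupoid.measure_le_sqrt_mul_mB hD hθ hR hY hA hAY
          (AlgGroupoid.subset_tau_slices hD)
          (fun i => AlgGroupoid.slice_lintegral_ge_tau hD hθ hR hY hA hAY i)
      have hTle : (𝒢.tildeMu μ N Ks τ ρ Y A).toReal
          ≤ (N:ℝ) * Real.sqrt θ * (μ A).toReal :=
        AlgGroupoid.tildeMu_toReal_le hD hθ hR hA hAY
      have hkey : C * (μ A).toReal
          < Real.sqrt θ * 𝒢.markovBoundary μ N Ks τ ρ Y A :=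
        lt_of_lt_of_le hExpA hDle
      have h5 : C / ((N:ℝ)*θ) * (𝒢.tildeMu μ N Ks τ ρ Y A).toReal
          ≤ C / ((N:ℝ)*θ) * ((N:ℝ) * Real.sqrt θ * (μ A).toReal) :=
        mul_le_mul_of_nonneg_left hTle hcnn
      refine lt_of_le_of_lt h5 ?_
      rw [div_mul_eq_mul_div, div_lt_iff₀ (mul_pos hN hθ0)]
      calc C * ((N:ℝ) * Real.sqrt θ * (μ A).toReal)
          = (C * (μ A).toReal) * ((N:ℝ) * Real.sqrt θ) := by ring
      _ < (Real.sqrt θ * 𝒢.markovBoundary μ N Ks τ ρ Y A) * ((N:ℝ) * Real.sqrt θ) :=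
          mul_lt_mul_of_pos_right hkey (mul_pos hN sθpos)
      _ = 𝒢.markovBoundary μ N Ks τ ρ Y A * ((N:ℝ) * θ) := by
          linear_combination ((N:ℝ) * 𝒢.markovBoundary μ N Ks τ ρ Y A) * hsq
    · -- apply expansion to the complement Y \ A
      push_neg at hcase
      have hBmeas : MeasurableSet (Y \ A) := hY.diff hA
      have hBY : Y \ A ⊆ Y := Set.diff_subset
      have htBfin : 𝒢.tildeMu μ N Ks τ ρ Y (Y \ A) ≠ ⊤ :=
        AlgGroupoid.tildeMu_ne_top hD hθ hR hBmeas hBY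
      have hunion : μ A + μ (Y \ A) = μ Y := by
        rw [← measure_union Set.disjoint_sdiff_right hBmeas, Set.union_diff_cancel hAY]
      have hadd : (μ A).toReal + (μ (Y \ A)).toReal = (μ Y).toReal := by
        rw [← ENNReal.toReal_add (measure_ne_top μ A) (measure_ne_top μ _), hunion]
      have hBhalf : (μ (Y \ A)).toReal ≤ (μ Y).toReal / 2 := by linarith
      have htadd : (𝒢.tildeMu μ N Ks τ ρ Y A).toReal
          + (𝒢.tildeMu μ N Ks τ ρ Y (Y \ A)).toReal
          = (𝒢.tildeMu μ N Ks τ ρ Y Y).toReal := by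
        rw [← ENNReal.toReal_add htAfin htBfin, AlgGroupoid.tildeMu_add hY hA hAY]
      have htApos : 0 < (𝒢.tildeMu μ N Ks τ ρ Y A).toReal :=
        ENNReal.toReal_pos (ne_of_gt hpos) htAfin
      have htAB : (𝒢.tildeMu μ N Ks τ ρ Y A).toReal
          ≤ (𝒢.tildeMu μ N Ks τ ρ Y (Y \ A)).toReal := by linarith
      have hμB0 : 0 < (μ (Y \ A)).toReal := by
        rcases eq_or_ne (μ (Y \ A)) 0 with h0 | h0
        · exfalso
          have h1 : (𝒢.tildeMu μ N Ks τ ρ Y (Y \ A)).toReal = 0 := by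
            rw [AlgGroupoid.tildeMu_zero h0]; simp
          linarith
        · exact ENNReal.toReal_pos h0 (measure_ne_top μ _)
      have hExpB := hExp (Y \ A) hBmeas hBY hμB0 hBhalf
      have hDle : (μ ((𝒢.rMul (⋃ i, Ks i) (Y \ A) \ (Y \ A)) ∩ Y)).toReal
          ≤ Real.sqrt θ * 𝒢.markovBoundary μ N Ks τ ρ Y A :=
        AlgGroupoid.measure_le_sqrt_mul_mB hD hθ hR hY hA hAY
          (AlgGroupoid.compl_bdry_subset_slices hD)
          (fun i => AlgGroupoid.slice_lintegral_ge_self hD hθ hR hY hA hAY i)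
      have hTle : (𝒢.tildeMu μ N Ks τ ρ Y (Y \ A)).toReal
          ≤ (N:ℝ) * Real.sqrt θ * (μ (Y \ A)).toReal :=
        AlgGroupoid.tildeMu_toReal_le hD hθ hR hBmeas hBY
      have hkey : C * (μ (Y \ A)).toReal
          < Real.sqrt θ * 𝒢.markovBoundary μ N Ks τ ρ Y A :=
        lt_of_lt_of_le hExpB hDle
      have h5 : C / ((N:ℝ)*θ) * (𝒢.tildeMu μ N Ks τ ρ Y A).toReal
          ≤ C / ((N:ℝ)*θ) * ((N:ℝ) * Real.sqrt θ * (μ (Y \ A)).toReal) :=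
        mul_le_mul_of_nonneg_left (htAB.trans hTle) hcnn
      refine lt_of_le_of_lt h5 ?_
      rw [div_mul_eq_mul_div, div_lt_iff₀ (mul_pos hN hθ0)]
      calc C * ((N:ℝ) * Real.sqrt θ * (μ (Y \ A)).toReal)
          = (C * (μ (Y \ A)).toReal) * ((N:ℝ) * Real.sqrt θ) := by ring
      _ < (Real.sqrt θ * 𝒢.markovBoundary μ N Ks τ ρ Y A) * ((N:ℝ) * Real.sqrt θ) :=
          mul_lt_mul_of_pos_right hkey (mul_pos hN sθpos)
      _ = 𝒢.markovBoundary μ N Ks τ ρ Y A * ((N:ℝ) * θ) := by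
          linear_combination ((N:ℝ) * 𝒢.markovBoundary μ N Ks τ ρ Y A) * hsq
  · -- (b)
    rintro ⟨Ks, τ, ρ, hD, hCh, hR⟩
    have hN : 0 < (N:ℝ) := by
      obtain ⟨i, _⟩ := hD.unital
      exact_mod_cast i.pos
    refine ⟨Ks, τ, ρ, hD, ?_⟩
    intro A hA hAY hApos hAhalf
    have hden : 0 < (N:ℝ) * Real.sqrt θ + kap := by positivity
    have hDnn : 0 ≤ (μ ((𝒢.rMul (⋃ i, Ks i) A \ A) ∩ Y)).toReal := ENNReal.toReal_nonneg
    suffices hkey : kap * (μ A).toReal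
        < (N:ℝ) * Real.sqrt θ * (μ ((𝒢.rMul (⋃ i, Ks i) A \ A) ∩ Y)).toReal by
      rw [div_mul_eq_mul_div, div_lt_iff₀ hden]
      nlinarith [mul_nonneg hkap.le hDnn]
    by_cases hcase : (𝒢.tildeMu μ N Ks τ ρ Y A).toReal
        ≤ (𝒢.tildeMu μ N Ks τ ρ Y Y).toReal / 2
    · have hμA0 : μ A ≠ 0 := by
        intro h0
        rw [h0] at hApos
        simp at hApos
      have htpos : 0 < 𝒢.tildeMu μ N Ks τ ρ Y A :=
        lt_of_lt_of_le (pos_iff_ne_zero.mpr hμA0) (AlgGroupoid.le_tildeMu hD hYsub hA hAY)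
      have hChA := hCh A hA hAY htpos hcase
      have hmBle : 𝒢.markovBoundary μ N Ks τ ρ Y A
          ≤ (N:ℝ) * Real.sqrt θ * (μ ((𝒢.rMul (⋃ i, Ks i) A \ A) ∩ Y)).toReal :=
        AlgGroupoid.mB_le_of_tau_subset hD hθ hR hY hA hAY
          (fun i => AlgGroupoid.tau_slices_subset hD i)
      have haT : (μ A).toReal ≤ (𝒢.tildeMu μ N Ks τ ρ Y A).toReal :=
        ENNReal.toReal_mono (AlgGroupoid.tildeMu_ne_top hD hθ hR hA hAY)
          (AlgGroupoid.le_tildeMu hD hYsub hA hAY)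
      calc kap * (μ A).toReal ≤ kap * (𝒢.tildeMu μ N Ks τ ρ Y A).toReal :=
          mul_le_mul_of_nonneg_left haT hkap.le
      _ < 𝒢.markovBoundary μ N Ks τ ρ Y A := hChA
      _ ≤ _ := hmBle
    · push_neg at hcase
      have hBmeas : MeasurableSet (Y \ A) := hY.diff hA
      have hBY : Y \ A ⊆ Y := Set.diff_subset
      have htAfin : 𝒢.tildeMu μ N Ks τ ρ Y A ≠ ⊤ :=
        AlgGroupoid.tildeMu_ne_top hD hθ hR hA hAY
      have htBfin : 𝒢.tildeMu μ N Ks τ ρ Y (Y \ A) ≠ ⊤ :=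
        AlgGroupoid.tildeMu_ne_top hD hθ hR hBmeas hBY
      have hunion : μ A + μ (Y \ A) = μ Y := by
        rw [← measure_union Set.disjoint_sdiff_right hBmeas, Set.union_diff_cancel hAY]
      have hadd : (μ A).toReal + (μ (Y \ A)).toReal = (μ Y).toReal := by
        rw [← ENNReal.toReal_add (measure_ne_top μ A) (measure_ne_top μ _), hunion]
      have htadd : (𝒢.tildeMu μ N Ks τ ρ Y A).toReal
          + (𝒢.tildeMu μ N Ks τ ρ Y (Y \ A)).toReal
          = (𝒢.tildeMu μ N Ks τ ρ Y Y).toReal := by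
        rw [← ENNReal.toReal_add htAfin htBfin, AlgGroupoid.tildeMu_add hY hA hAY]
      have htB : (𝒢.tildeMu μ N Ks τ ρ Y (Y \ A)).toReal
          ≤ (𝒢.tildeMu μ N Ks τ ρ Y Y).toReal / 2 := by linarith
      have hbA : (μ A).toReal ≤ (μ (Y \ A)).toReal := by linarith
      have hbpos : 0 < (μ (Y \ A)).toReal := lt_of_lt_of_le hApos hbA
      have hμB0 : μ (Y \ A) ≠ 0 := by
        intro h0
        rw [h0] at hbpos
        simp at hbpos
      have htBpos : 0 < 𝒢.tildeMu μ N Ks τ ρ Y (Y \ A) :=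
        lt_of_lt_of_le (pos_iff_ne_zero.mpr hμB0)
          (AlgGroupoid.le_tildeMu hD hYsub hBmeas hBY)
      have hChB := hCh (Y \ A) hBmeas hBY htBpos htB
      have hmBle : 𝒢.markovBoundary μ N Ks τ ρ Y (Y \ A)
          ≤ (N:ℝ) * Real.sqrt θ * (μ ((𝒢.rMul (⋃ i, Ks i) A \ A) ∩ Y)).toReal :=
        AlgGroupoid.mB_le_of_subset hD hθ hR hY hBmeas hBY
          (fun i => AlgGroupoid.compl_slices_subset_bdry hD hAY i)
      have hbT : (μ (Y \ A)).toReal ≤ (𝒢.tildeMu μ N Ks τ ρ Y (Y \ A)).toReal :=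
        ENNReal.toReal_mono htBfin (AlgGroupoid.le_tildeMu hD hYsub hBmeas hBY)
      calc kap * (μ A).toReal ≤ kap * (𝒢.tildeMu μ N Ks τ ρ Y (Y \ A)).toReal :=
          mul_le_mul_of_nonneg_left (hbA.trans hbT) hkap.le
      _ < 𝒢.markovBoundary μ N Ks τ ρ Y (Y \ A) := hChB
      _ ≤ _ := hmBle
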